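/- Suppose that (i) the map α: C → Hom(A/C, N), c ↦ ([a] ↦ (a,c)), is a group isomorphism, and (ii) the pairing (B ∩ C) × A/(B+C) → N induced by (·,·) is unimodular. Then B = B^⊥. -/

import Mathlib

namespace OrthPairing

variable {A N : Type*} [AddCommGroup A] [AddCommGroup N]

/-- The orthogonal `E^⊥ = {a ∈ A | (a, e) = 0 for all e ∈ E}` of a subgroup `E` of `A`
with respect to a bilinear pairing `b : A × A → N`. -/
def orth (b : A →+ A →+ N) (E : AddSubgroup A) : AddSubgroup A where
  carrier := {a : A | ∀ e ∈ E, b a e = 0}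
  zero_mem' := by intro e he; simp
  add_mem' := by
    intro x y hx hy e he
    simp [hx e he, hy e he]
  neg_mem' := by
    intro x hx e he
    simp [hx e he]

/-- The map `C → Hom(A/D, N)`, `c ↦ ([a] ↦ (a, c))`, defined whenever `(x, c) = 0`
for all `x ∈ D` and `c ∈ C`. -/
def mapToHom (b : A →+ A →+ N) (C D : AddSubgroup A)
    (h : ∀ c ∈ C, ∀ x ∈ D, b x c = 0) : ↥C →+ (A ⧸ D) →+ N where
  toFun c := QuotientAddGroup.lift D (b.flip (c : A)) (fun x hx => h c c.2 x hx)
  map_zero' := AddMonoidHom.ext fun q =>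
    QuotientAddGroup.induction_on q (fun a => by simp)
  map_add' x y := AddMonoidHom.ext fun q =>
    QuotientAddGroup.induction_on q (fun a => by simp; rfl)

/-- The map `A → Hom(E, N)`, `a ↦ (c ↦ (a, c))`. -/
def toHomOnSub (b : A →+ A →+ N) (E : AddSubgroup A) : A →+ ↥E →+ N where
  toFun a := (b a).comp E.subtype
  map_zero' := by ext c; simp
  map_add' x y := by ext c; simp

/-- The map `A/D → Hom(E, N)`, `[a] ↦ (c ↦ (a, c))`, defined whenever `(x, c) = 0`
for all `x ∈ D` and `c ∈ E`. -/
def quotToHomOnSub (b : A →+ A →+ N) (E D : AddSubgroup A)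
    (h : ∀ c ∈ E, ∀ x ∈ D, b x c = 0) : (A ⧸ D) →+ ↥E →+ N :=
  QuotientAddGroup.lift D (toHomOnSub b E)
    (fun x hx => AddMonoidHom.ext fun c => h c c.2 x hx)

lemma pair_eq_zero_of_isotropic {b : A →+ A →+ N} {B C : AddSubgroup A}
    (hB : B ≤ orth b B) (hC : C ≤ orth b C) :
    ∀ c ∈ B ⊓ C, ∀ x ∈ B ⊔ C, b x c = 0 := by
  intro c hc x hx
  rcases AddSubgroup.mem_sup.mp hx with ⟨y, hy, z, hz, rfl⟩
  have hyc : b y c = 0 := hB hy c hc.1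
  have hzc : b z c = 0 := hC hz c hc.2
  simp [hyc, hzc]

/-- Corollary 2.2: let `(·,·) : A × A → N` be a (anti)symmetric bilinear pairing and
`B, C ⊆ A` isotropic subgroups.  Suppose (i) the map `α : C → Hom(A/C, N)`,
`c ↦ ([a] ↦ (a,c))`, is an isomorphism, and (ii) the induced pairing
`(B ∩ C) × A/(B+C) → N` is unimodular.  Then `B = B^⊥`. -/
theorem eq_orth_of_unimodular (b : A →+ A →+ N) (B C : AddSubgroup A)
    (hsym : (∀ x y : A, b x y = b y x) ∨ (∀ x y : A, b x y = - b y x))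
    (hB : B ≤ orth b B) (hC : C ≤ orth b C)
    (hα : Function.Bijective ⇑(mapToHom b C C (fun c hc x hx => hC hx c hc)))
    (huni₁ : Function.Bijective
      ⇑(mapToHom b (B ⊓ C) (B ⊔ C) (pair_eq_zero_of_isotropic hB hC)))
    (huni₂ : Function.Bijective
      ⇑(quotToHomOnSub b (B ⊓ C) (B ⊔ C)
        (fun c hc x hx => pair_eq_zero_of_isotropic hB hC c hc x hx))) :
    B = orth b B := by
  refine le_antisymm hB fun a ha => ?_
  have haB : ∀ e ∈ B, b a e = 0 := ha
  -- Step A: a ∈ B ⊔ C, by injectivity of huni₂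
  have hmem : a ∈ B ⊔ C := by
    have h0 : quotToHomOnSub b (B ⊓ C) (B ⊔ C)
        (fun c hc x hx => pair_eq_zero_of_isotropic hB hC c hc x hx)
        (QuotientAddGroup.mk a) = 0 := by
      refine AddMonoidHom.ext fun c => ?_
      simpa [quotToHomOnSub, toHomOnSub] using haB c c.2.1
    have := huni₂.injective (h0.trans (map_zero _).symm)
    rwa [← QuotientAddGroup.eq_zero_iff]
  obtain ⟨u, hu, v, hvC, rfl⟩ := AddSubgroup.mem_sup.mp hmem
  have hvB : ∀ e ∈ B, b v e = 0 := by
    intro e he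
    have h1 : b (u + v) e = 0 := haB e he
    have h2 : b u e = 0 := hB hu e he
    simpa [h2] using h1
  have hkill : ∀ x ∈ B ⊔ C, b x v = 0 := by
    intro x hx
    rcases AddSubgroup.mem_sup.mp hx with ⟨y, hy, z, hz, rfl⟩
    have hyv : b y v = 0 := by
      have h3 := hvB y hy
      rcases hsym with hs | hs
      · rw [hs]; exact h3
      · rw [hs, h3, neg_zero]
    have hzv : b z v = 0 := hC hz v hvC
    simp [hyv, hzv]
  set ψ : (A ⧸ (B ⊔ C)) →+ N :=
    QuotientAddGroup.lift (B ⊔ C) (b.flip v) (fun x hx => hkill x hx) with hψ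
  obtain ⟨c₀, hc₀⟩ := huni₁.surjective ψ
  have hc₀' : ∀ x : A, b x (c₀ : A) = b x v := by
    intro x
    have h4 := congrArg (fun f => f (QuotientAddGroup.mk x)) hc₀
    exact h4
  have hveq : v = (c₀ : A) := by
    have h0 : mapToHom b C C (fun c hc x hx => hC hx c hc)
        (⟨(c₀ : A), c₀.2.2⟩ - ⟨v, hvC⟩ : C) = 0 := by
      refine AddMonoidHom.ext fun q =>
        QuotientAddGroup.induction_on q fun x => ?_
      simp [mapToHom, hc₀' x]
    have h5 := hα.injective (h0.trans (map_zero _).symm)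
    have h6 : (⟨(c₀ : A), c₀.2.2⟩ : C) = ⟨v, hvC⟩ := by
      rwa [sub_eq_zero] at h5
    exact (congrArg Subtype.val h6).symm
  have hvBmem : v ∈ B := hveq ▸ c₀.2.1
  exact B.add_mem hu hvBmem

end OrthPairing
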